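/- Let M₀ ⊆ M₁ and M₀ ⊆ M₂ be uncountable models of ψ. Then there exists a model N of ψ with embeddings of M₁ and M₂ into N commuting over M₀; i.e., the class of models of ψ satisfies the amalgamation property in every uncountable cardinality in its spectrum. -/

import Mathlib

open Cardinal

/-- A set-theoretic tree: a transitive well-founded relation in which the
predecessors of any element are linearly ordered. -/
structure STree : Type 1 where
  σ : Type
  lt : σ → σ → Prop
  lt_trans : ∀ a b c, lt a b → lt b c → lt a c
  wf : WellFounded lt
  pred_linear : ∀ c a b, lt a c → lt b c → a = b ∨ lt a b ∨ lt b a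

/-- The level (rank) of a node of a tree. -/
noncomputable def STree.rank (T : STree) (x : T.σ) : Ordinal := (T.wf.apply x).rank

/-- A cofinal branch of height `κ`: a downward-closed chain meeting every level below `κ.ord`. -/
def STree.IsCofBranch (T : STree) (κ : Cardinal) (B : Set T.σ) : Prop :=
  (∀ x ∈ B, ∀ y, T.lt y x → y ∈ B) ∧
  (∀ x ∈ B, ∀ y ∈ B, x = y ∨ T.lt x y ∨ T.lt y x) ∧
  (∀ o : Ordinal, o < κ.ord → ∃ x ∈ B, T.rank x = o)

/-- The number of cofinal branches of height `κ`. -/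
noncomputable def STree.branchCard (T : STree) (κ : Cardinal) : Cardinal :=
  #{B : Set T.σ // T.IsCofBranch κ B}

/-- A `κ`-Kurepa tree: height `κ`, levels of size `< κ`, and at least `κ⁺` cofinal branches. -/
def IsKurepaTree (κ : Cardinal) (T : STree) : Prop :=
  ℵ₀ ≤ κ ∧
  (∀ x : T.σ, T.rank x < κ.ord) ∧
  (∀ o : Ordinal, o < κ.ord → ∃ x : T.σ, T.rank x = o) ∧
  (∀ o : Ordinal, #{x : T.σ // T.rank x = o} < κ) ∧
  Order.succ κ ≤ T.branchCard κ

/-- A model of the sentence `ψ`: a tree whose levels are indexed by an ℵ₁-like linear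
order `L` with a maximum element `⊤`; `V a` is the (countable, for `a ≠ ⊤`) set of nodes
at level `a`, and `V ⊤` is the set of maximal branches. -/
structure PsiModel : Type 1 where
  L : Type
  [linL : LinearOrder L]
  [topL : OrderTop L]
  alephOneLike : ∀ a : L, a ≠ ⊤ → (Set.Iic a).Countable
  V : L → Type
  level_countable : ∀ a : L, a ≠ ⊤ → Countable (V a)
  level_nonempty : ∀ a : L, Nonempty (V a)
  tlt : (Σ a : L, V a) → (Σ a : L, V a) → Prop
  tlt_level : ∀ x y, tlt x y → x.1 < y.1
  tlt_trans : ∀ x y z, tlt x y → tlt y z → tlt x z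
  tlt_total : ∀ x y z, tlt x z → tlt y z → x.1 < y.1 → tlt x y
  tlt_below : ∀ (x : Σ a : L, V a) (b : L), b < x.1 → ∃ y : V b, tlt ⟨b, y⟩ x
  pruned : ∀ x : Σ a : L, V a, x.1 ≠ ⊤ → ∃ y : V ⊤, tlt x ⟨⊤, y⟩
  branch_unique : ∀ x y : V ⊤, (∀ z, tlt z ⟨⊤, x⟩ ↔ tlt z ⟨⊤, y⟩) → x = y

attribute [instance] PsiModel.linL PsiModel.topL

/-- The cardinality of a model of `ψ` (the universe is `P ∪ L ∪ V` with `P` countably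
infinite). -/
noncomputable def PsiModel.card (M : PsiModel) : Cardinal :=
  ℵ₀ + #M.L + #(Σ a : M.L, M.V a)

/-- A substructure embedding between models of `ψ`, incorporating the derived properties:
the level order of the smaller model is an initial segment of that of the larger one,
non-maximal levels agree, and the tree order is preserved. -/
structure PsiEmbed (M N : PsiModel) where
  fL : M.L → N.L
  fL_mono : StrictMono fL
  fL_init : ∀ (a : M.L) (c : N.L), c ≤ fL a → ∃ b : M.L, fL b = c
  fV : ∀ a : M.L, M.V a → N.V (fL a)
  fV_inj : ∀ a : M.L, Function.Injective (fV a)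
  fV_surj : ∀ a : M.L, a ≠ ⊤ → Function.Surjective (fV a)
  tlt_iff : ∀ x y : (Σ a : M.L, M.V a),
    M.tlt x y ↔ N.tlt ⟨fL x.1, fV x.1 x.2⟩ ⟨fL y.1, fV y.1 y.2⟩

/-- The induced map on nodes. -/
def PsiEmbed.map {M N : PsiModel} (e : PsiEmbed M N) (x : Σ a : M.L, M.V a) :
    Σ a : N.L, N.V a := ⟨e.fL x.1, e.fV x.1 x.2⟩

/-- A model of `ψ` is maximal if it has no proper extension: every embedding into another
model of `ψ` is onto. -/
def PsiModel.MaximalModel (M : PsiModel) : Prop :=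
  ∀ (N : PsiModel) (e : PsiEmbed M N),
    Function.Surjective e.fL ∧ ∀ a : M.L, Function.Surjective (e.fV a)

section Aux
variable {M₀ M : PsiModel}

theorem PsiEmbed.fL_top (h₀ : ℵ₀ < M₀.card) (e : PsiEmbed M₀ M) : e.fL ⊤ = ⊤ := by
  by_contra h
  have hIic : (Set.Iic (e.fL ⊤)).Countable := M.alephOneLike (e.fL ⊤) h
  have hc := hIic.to_subtype
  have hL : Countable M₀.L := by
    have hi : Function.Injective
        (fun a : M₀.L => (⟨e.fL a, e.fL_mono.monotone le_top⟩ : Set.Iic (e.fL ⊤))) := by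
      intro a b hab
      exact e.fL_mono.injective (congrArg Subtype.val hab)
    exact hi.countable
  have hVtop : Countable (M₀.V ⊤) := by
    have := M.level_countable _ h
    exact (e.fV_inj ⊤).countable
  have hV : ∀ a : M₀.L, Countable (M₀.V a) := by
    intro a
    by_cases h' : a = ⊤
    · subst h'; exact hVtop
    · exact M₀.level_countable a h'
  have hS : Countable (Σ a : M₀.L, M₀.V a) := by
    exact instCountableSigma
  have : M₀.card ≤ ℵ₀ := by
    unfold PsiModel.card
    have l1 : #M₀.L ≤ ℵ₀ := Cardinal.mk_le_aleph0
    have l2 : #(Σ a : M₀.L, M₀.V a) ≤ ℵ₀ := Cardinal.mk_le_aleph0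
    calc ℵ₀ + #M₀.L + #(Σ a : M₀.L, M₀.V a) ≤ ℵ₀ + ℵ₀ + ℵ₀ := by
          exact add_le_add (add_le_add le_rfl l1) l2
      _ = ℵ₀ := by simp
  exact absurd this h₀.not_ge
end Aux
section Aux2
variable {M₀ M : PsiModel}

theorem PsiEmbed.fL_inj (e : PsiEmbed M₀ M) : Function.Injective e.fL :=
  e.fL_mono.injective

theorem PsiEmbed.fL_surj (h₀ : ℵ₀ < M₀.card) (e : PsiEmbed M₀ M) :
    Function.Surjective e.fL := fun c => e.fL_init ⊤ c (e.fL_top h₀ ▸ le_top)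

theorem PsiEmbed.map_inj (e : PsiEmbed M₀ M) : Function.Injective e.map := by
  rintro ⟨a, v⟩ ⟨b, w⟩ hab
  obtain ⟨h1, h2⟩ := Sigma.mk.inj_iff.mp hab
  obtain rfl : a = b := e.fL_mono.injective h1
  obtain rfl : v = w := e.fV_inj a (eq_of_heq h2)
  rfl

/-- Every node of `M` at a non-top level is in the image of `e.map`. -/
theorem PsiEmbed.lift (h₀ : ℵ₀ < M₀.card) (e : PsiEmbed M₀ M)
    (x : Σ a : M.L, M.V a) (hx : x.1 ≠ ⊤) :
    ∃ z : Σ a : M₀.L, M₀.V a, e.map z = x := by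
  obtain ⟨a, v⟩ := x
  obtain ⟨a₀, rfl⟩ := e.fL_surj h₀ a
  have ha₀ : a₀ ≠ ⊤ := by
    rintro rfl; exact hx (e.fL_top h₀)
  obtain ⟨v₀, rfl⟩ := e.fV_surj a₀ ha₀ v
  exact ⟨⟨a₀, v₀⟩, rfl⟩
end Aux2
section Amalg
variable {M₀ M₁ M₂ : PsiModel} (e₁ : PsiEmbed M₀ M₁) (e₂ : PsiEmbed M₀ M₂)

/-- The branch `x` of `M₁` and the node `p` of `M₂` (a branch, in applications) have the
same sets of predecessors coming from `M₀`. -/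
def SamePredS (x : M₁.V ⊤) (p : Σ a : M₂.L, M₂.V a) : Prop :=
  ∀ z : Σ a : M₀.L, M₀.V a, M₁.tlt (e₁.map z) ⟨⊤, x⟩ ↔ M₂.tlt (e₂.map z) p

/-- The genuinely new branches of `M₂`: those matching no branch of `M₁`. -/
def Extra : Type := {y : M₂.V ⊤ // ¬∃ x : M₁.V ⊤, SamePredS e₁ e₂ x ⟨⊤, y⟩}

/-- The levels of the amalgam. -/
def NV (a : M₁.L) : Type := M₁.V a ⊕ {_c : Extra e₁ e₂ // a = ⊤}

/-- The tree order of the amalgam. -/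
def Ntlt : (Σ a : M₁.L, NV e₁ e₂ a) → (Σ a : M₁.L, NV e₁ e₂ a) → Prop
  | ⟨a, .inl v⟩, ⟨b, .inl w⟩ => M₁.tlt ⟨a, v⟩ ⟨b, w⟩
  | ⟨a, .inl v⟩, ⟨_, .inr c⟩ =>
      ∃ z : Σ a₀ : M₀.L, M₀.V a₀, e₁.map z = ⟨a, v⟩ ∧ M₂.tlt (e₂.map z) ⟨⊤, c.1.1⟩
  | ⟨_, .inr _⟩, _ => False

theorem ntlt_inl_inl {a b : M₁.L} (v : M₁.V a) (w : M₁.V b) :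
    Ntlt e₁ e₂ ⟨a, .inl v⟩ ⟨b, .inl w⟩ ↔ M₁.tlt ⟨a, v⟩ ⟨b, w⟩ := Iff.rfl

theorem ntlt_inl_inr {a b : M₁.L} (v : M₁.V a) (c : {_c : Extra e₁ e₂ // b = ⊤}) :
    Ntlt e₁ e₂ ⟨a, .inl v⟩ ⟨b, .inr c⟩ ↔
      ∃ z : Σ a₀ : M₀.L, M₀.V a₀, e₁.map z = ⟨a, v⟩ ∧ M₂.tlt (e₂.map z) ⟨⊤, c.1.1⟩ := Iff.rfl

theorem ntlt_inr {a b : M₁.L} (c : {_c : Extra e₁ e₂ // a = ⊤}) (y : NV e₁ e₂ b) :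
    ¬ Ntlt e₁ e₂ ⟨a, .inr c⟩ ⟨b, y⟩ := fun h => by cases y <;> exact h
end Amalg
section Amalg2
variable {M₀ M₁ M₂ : PsiModel} (e₁ : PsiEmbed M₀ M₁) (e₂ : PsiEmbed M₀ M₂)

theorem not_tlt_of_top {M : PsiModel} (e : PsiEmbed M₀ M) (h₀ : ℵ₀ < M₀.card)
    (z : Σ a : M₀.L, M₀.V a) (hz : z.1 = ⊤) (p : Σ a : M.L, M.V a) :
    ¬ M.tlt (e.map z) p := by
  intro ht
  have h1 := M.tlt_level _ _ ht
  have h2 : (e.map z).1 = ⊤ := by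
    show e.fL z.1 = ⊤
    rw [hz, e.fL_top h₀]
  rw [h2] at h1
  exact absurd (h1.trans_le le_top) (lt_irrefl _)

theorem samePred_unique_left (h₀ : ℵ₀ < M₀.card) (x x' : M₁.V ⊤) (p : Σ a : M₂.L, M₂.V a)
    (h : SamePredS e₁ e₂ x p) (h' : SamePredS e₁ e₂ x' p) : x = x' := by
  apply M₁.branch_unique
  intro w
  by_cases hw : w.1 = ⊤
  · constructor <;> intro ht <;>
      · have := M₁.tlt_level _ _ ht
        rw [hw] at this
        exact absurd this (lt_irrefl _)
  · obtain ⟨z, rfl⟩ := e₁.lift h₀ w hw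
    exact (h z).trans (h' z).symm

theorem samePred_unique_right (h₀ : ℵ₀ < M₀.card) (x : M₁.V ⊤) (p p' : M₂.V ⊤)
    (h : SamePredS e₁ e₂ x ⟨⊤, p⟩) (h' : SamePredS e₁ e₂ x ⟨⊤, p'⟩) : p = p' := by
  apply M₂.branch_unique
  intro w
  by_cases hw : w.1 = ⊤
  · constructor <;> intro ht <;>
      · have := M₂.tlt_level _ _ ht
        rw [hw] at this
        exact absurd this (lt_irrefl _)
  · obtain ⟨z, rfl⟩ := e₂.lift h₀ w hw
    exact ((h z).symm.trans (h' z))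

theorem sigma_cast {α : Type} {F : α → Type} {b b' : α} (e : b' = b) (w : F b') :
    (⟨b, cast (congrArg F e) w⟩ : Σ x, F x) = ⟨b', w⟩ := by subst e; rfl

theorem sigma_mk_snd {α : Type} {F : α → Type} {b : α} {x y : F b}
    (h : (⟨b, x⟩ : Σ x, F x) = ⟨b, y⟩) : x = y :=
  eq_of_heq (Sigma.mk.inj_iff.mp h).2

theorem sigma_inl_cast {b b' : M₁.L} (e : b' = b) (w : M₁.V b') :
    (⟨b, Sum.inl (cast (congrArg M₁.V e) w)⟩ : Σ a, NV e₁ e₂ a) = ⟨b', Sum.inl w⟩ := by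
  subst e; rfl

theorem sigma_inr_cast {b : M₁.L} (c : Extra e₁ e₂) (pf : b = ⊤) :
    (⟨b, Sum.inr ⟨c, pf⟩⟩ : Σ a, NV e₁ e₂ a) = ⟨⊤, Sum.inr ⟨c, rfl⟩⟩ := by
  subst pf; rfl

/-- The key computation of the order below a new branch on nodes coming from `M₀`. -/
theorem ntlt_map_inr (z : Σ a : M₀.L, M₀.V a) {b : M₁.L}
    (c : {_c : Extra e₁ e₂ // b = ⊤}) :
    Ntlt e₁ e₂ ⟨e₁.fL z.1, .inl (e₁.fV z.1 z.2)⟩ ⟨b, .inr c⟩ ↔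
      M₂.tlt (e₂.map z) ⟨⊤, c.1.1⟩ := by
  rw [ntlt_inl_inr]
  constructor
  · rintro ⟨z', hz', ht⟩
    obtain rfl : z' = z := e₁.map_inj hz'
    exact ht
  · intro ht
    exact ⟨z, rfl, ht⟩
end Amalg2
section Amalg3
variable {M₀ M₁ M₂ : PsiModel} (e₁ : PsiEmbed M₀ M₁) (e₂ : PsiEmbed M₀ M₂)

/-- The amalgam of `M₁` and `M₂` over `M₀`. -/
noncomputable def amalg (h₀ : ℵ₀ < M₀.card) : PsiModel where
  L := M₁.L
  linL := M₁.linL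
  topL := M₁.topL
  alephOneLike := M₁.alephOneLike
  V := NV e₁ e₂
  level_countable := fun a ha => by
    have i1 : Countable (M₁.V a) := M₁.level_countable a ha
    have i2 : IsEmpty {_c : Extra e₁ e₂ // a = ⊤} := ⟨fun c => ha c.2⟩
    unfold NV
    infer_instance
  level_nonempty := fun a => ⟨.inl (M₁.level_nonempty a).some⟩
  tlt := Ntlt e₁ e₂
  tlt_level := by
    rintro ⟨a, v | c⟩ ⟨b, w | d⟩ h
    · exact M₁.tlt_level _ _ h
    · obtain ⟨z, hz, ht⟩ := h
      have hlt : e₂.fL z.1 < ⊤ := by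
        have := M₂.tlt_level _ _ ht
        exact this.trans_le le_top
      have hzt : z.1 < ⊤ := by
        rcases lt_or_eq_of_le (le_top (a := z.1)) with h' | h'
        · exact h'
        · rw [h', e₂.fL_top h₀] at hlt
          exact absurd hlt (lt_irrefl _)
      have ha : a = e₁.fL z.1 := (congrArg Sigma.fst hz).symm
      show a < b
      rw [d.2, ha]
      calc e₁.fL z.1 < e₁.fL ⊤ := e₁.fL_mono hzt
        _ = ⊤ := e₁.fL_top h₀
    · exact h.elim
    · exact h.elim
  tlt_trans := by
    rintro ⟨a, v | c⟩ ⟨b, w | d⟩ ⟨cl, u | f⟩ h1 h2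
    · exact M₁.tlt_trans _ _ _ h1 h2
    · obtain ⟨z, hz, ht⟩ := h2
      have ha : a ≠ ⊤ := by
        have := M₁.tlt_level _ _ h1
        exact ((this.trans_le le_top).ne)
      obtain ⟨z', hz'⟩ := e₁.lift h₀ ⟨a, v⟩ ha
      refine ⟨z', hz', ?_⟩
      have h1' : M₁.tlt (e₁.map z') (e₁.map z) := by rw [hz', hz]; exact h1
      have h0 : M₀.tlt z' z := (e₁.tlt_iff z' z).mpr h1'
      exact M₂.tlt_trans _ _ _ ((e₂.tlt_iff z' z).mp h0) ht
    · exact h2.elim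
    · exact h2.elim
    · exact h1.elim
    · exact h1.elim
    · exact h1.elim
    · exact h1.elim
  tlt_total := by
    rintro ⟨a, v | c⟩ ⟨b, w | d⟩ ⟨cl, u | f⟩ h1 h2 hlt
    · exact M₁.tlt_total _ _ _ h1 h2 hlt
    · obtain ⟨zx, hzx, htx⟩ := h1
      obtain ⟨zy, hzy, hty⟩ := h2
      have hax : a = e₁.fL zx.1 := (congrArg Sigma.fst hzx).symm
      have hay : b = e₁.fL zy.1 := (congrArg Sigma.fst hzy).symm
      have hz : zx.1 < zy.1 := by
        apply e₁.fL_mono.lt_iff_lt.mp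
        rw [← hax, ← hay]; exact hlt
      have h2lt : (e₂.map zx).1 < (e₂.map zy).1 := e₂.fL_mono hz
      have h2' : M₂.tlt (e₂.map zx) (e₂.map zy) := M₂.tlt_total _ _ _ htx hty h2lt
      have h0 : M₀.tlt zx zy := (e₂.tlt_iff zx zy).mpr h2'
      have h1' : M₁.tlt (e₁.map zx) (e₁.map zy) := (e₁.tlt_iff zx zy).mp h0
      rw [hzx, hzy] at h1'
      exact h1'
    · exact h2.elim
    · exact h2.elim
    · exact h1.elim
    · exact h1.elim
    · exact h1.elim
    · exact h1.elim
  tlt_below := by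
    rintro ⟨a, v | c⟩ b hb
    · obtain ⟨y, hy⟩ := M₁.tlt_below ⟨a, v⟩ b hb
      exact ⟨.inl y, hy⟩
    · have hbt : b ≠ ⊤ := (hb.trans_le le_top).ne
      obtain ⟨b₀, rfl⟩ := e₁.fL_surj h₀ b
      have hb₀ : b₀ ≠ ⊤ := by
        rintro rfl
        exact hbt (e₁.fL_top h₀)
      have hb₂ : e₂.fL b₀ < ⊤ := by
        calc e₂.fL b₀ < e₂.fL ⊤ := e₂.fL_mono (hb₀.lt_top)
          _ = ⊤ := e₂.fL_top h₀
      obtain ⟨y₂, hy₂⟩ := M₂.tlt_below ⟨⊤, c.1.1⟩ (e₂.fL b₀) hb₂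
      obtain ⟨z₀, hz₀⟩ := e₂.fV_surj b₀ hb₀ y₂
      refine ⟨.inl (e₁.fV b₀ z₀), ?_⟩
      rw [ntlt_map_inr e₁ e₂ ⟨b₀, z₀⟩ c]
      show M₂.tlt ⟨e₂.fL b₀, e₂.fV b₀ z₀⟩ _
      rw [hz₀]
      exact hy₂
  pruned := by
    rintro ⟨a, v | c⟩ ha
    · obtain ⟨y, hy⟩ := M₁.pruned ⟨a, v⟩ ha
      exact ⟨.inl y, hy⟩
    · exact absurd c.2 ha
  branch_unique := by
    rintro (x | ⟨c, hc⟩) (y | ⟨d, hd⟩) h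
    · congr 1
      apply M₁.branch_unique
      rintro ⟨b, u⟩
      exact h ⟨b, .inl u⟩
    · exfalso
      apply d.2
      refine ⟨x, fun z => ?_⟩
      by_cases hz : z.1 = ⊤
      · exact iff_of_false
          (not_tlt_of_top e₁ h₀ z hz _) (not_tlt_of_top e₂ h₀ z hz _)
      · have := h ⟨e₁.fL z.1, .inl (e₁.fV z.1 z.2)⟩
        rw [ntlt_map_inr e₁ e₂ z ⟨d, rfl⟩] at this
        exact this
    · exfalso
      apply c.2
      refine ⟨y, fun z => ?_⟩
      by_cases hz : z.1 = ⊤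
      · exact iff_of_false
          (not_tlt_of_top e₁ h₀ z hz _) (not_tlt_of_top e₂ h₀ z hz _)
      · have := (h ⟨e₁.fL z.1, .inl (e₁.fV z.1 z.2)⟩).symm
        rw [ntlt_map_inr e₁ e₂ z ⟨c, rfl⟩] at this
        exact this
    · have : c = d := by
        apply Subtype.ext
        apply M₂.branch_unique
        intro w
        by_cases hw : w.1 = ⊤
        · constructor <;> intro ht <;>
            · have := M₂.tlt_level _ _ ht
              rw [hw] at this
              exact absurd this (lt_irrefl _)
        · obtain ⟨z, rfl⟩ := e₂.lift h₀ w hw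
          have := h ⟨e₁.fL z.1, .inl (e₁.fV z.1 z.2)⟩
          rw [ntlt_map_inr e₁ e₂ z ⟨c, rfl⟩, ntlt_map_inr e₁ e₂ z ⟨d, rfl⟩] at this
          exact this
      subst this
      rfl
end Amalg3
section Amalg4
variable {M₀ M₁ M₂ : PsiModel} (e₁ : PsiEmbed M₀ M₁) (e₂ : PsiEmbed M₀ M₂)

/-- The embedding of `M₁` into the amalgam. -/
noncomputable def amalgF1 (h₀ : ℵ₀ < M₀.card) : PsiEmbed M₁ (amalg e₁ e₂ h₀) where
  fL := id
  fL_mono := strictMono_id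
  fL_init := fun _ c _ => ⟨c, rfl⟩
  fV := fun _ v => .inl v
  fV_inj := fun _ _ _ h => by injection h
  fV_surj := fun a ha w => by
    rcases w with v | c
    · exact ⟨v, rfl⟩
    · exact absurd c.2 ha
  tlt_iff := fun x y => by
    obtain ⟨a, v⟩ := x
    obtain ⟨b, w⟩ := y
    exact Iff.rfl
end Amalg4
section Amalg5
variable {M₀ M₁ M₂ : PsiModel} (e₁ : PsiEmbed M₀ M₁) (e₂ : PsiEmbed M₀ M₂)

/-- The level map of the embedding of `M₂` into the amalgam. -/
noncomputable def gL (a : M₂.L) : M₁.L :=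
  haveI : Nonempty M₀.L := ⟨⊤⟩
  e₁.fL (Function.invFun e₂.fL a)

theorem gL_spec (a₀ : M₀.L) : gL e₁ e₂ (e₂.fL a₀) = e₁.fL a₀ := by
  haveI : Nonempty M₀.L := ⟨⊤⟩
  unfold gL
  rw [Function.leftInverse_invFun e₂.fL_inj a₀]

theorem gL_mono (h₀ : ℵ₀ < M₀.card) : StrictMono (gL e₁ e₂) := by
  intro a b hab
  obtain ⟨a₀, rfl⟩ := e₂.fL_surj h₀ a
  obtain ⟨b₀, rfl⟩ := e₂.fL_surj h₀ b
  rw [gL_spec, gL_spec]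
  exact e₁.fL_mono (e₂.fL_mono.lt_iff_lt.mp hab)

theorem gL_surj (h₀ : ℵ₀ < M₀.card) : Function.Surjective (gL e₁ e₂) := by
  intro d
  obtain ⟨a₀, rfl⟩ := e₁.fL_surj h₀ d
  exact ⟨e₂.fL a₀, gL_spec e₁ e₂ a₀⟩

theorem gL_top (h₀ : ℵ₀ < M₀.card) : gL e₁ e₂ (⊤ : M₂.L) = ⊤ := by
  rw [← e₂.fL_top h₀, gL_spec, e₁.fL_top h₀]

/-- The canonical preimage in `M₀` of a non-top node of `M₂`. -/
noncomputable def pull (h₀ : ℵ₀ < M₀.card) (a : M₂.L) (v : M₂.V a) (h : a ≠ ⊤) :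
    Σ a₀ : M₀.L, M₀.V a₀ :=
  (e₂.lift h₀ ⟨a, v⟩ h).choose

theorem pull_spec (h₀ : ℵ₀ < M₀.card) (a : M₂.L) (v : M₂.V a) (h : a ≠ ⊤) :
    e₂.map (pull e₂ h₀ a v h) = ⟨a, v⟩ :=
  (e₂.lift h₀ ⟨a, v⟩ h).choose_spec

theorem pull_fst (h₀ : ℵ₀ < M₀.card) (a : M₂.L) (v : M₂.V a) (h : a ≠ ⊤) :
    e₂.fL (pull e₂ h₀ a v h).1 = a :=
  congrArg Sigma.fst (pull_spec e₂ h₀ a v h)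

theorem pull_gL (h₀ : ℵ₀ < M₀.card) (a : M₂.L) (v : M₂.V a) (h : a ≠ ⊤) :
    e₁.fL (pull e₂ h₀ a v h).1 = gL e₁ e₂ a := by
  rw [← gL_spec e₁ e₂, pull_fst e₂ h₀ a v h]

open Classical in
/-- The level-wise map of the embedding of `M₂` into the amalgam. -/
noncomputable def fV2 (h₀ : ℵ₀ < M₀.card) (a : M₂.L) (v : M₂.V a) :
    NV e₁ e₂ (gL e₁ e₂ a) :=
  if h : a = ⊤ then
    if hm : ∃ x : M₁.V ⊤, SamePredS e₁ e₂ x ⟨a, v⟩ then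
      Sum.inl (cast (congrArg M₁.V
        (show (⊤ : M₁.L) = gL e₁ e₂ a by rw [h, gL_top e₁ e₂ h₀])) hm.choose)
    else
      Sum.inr ⟨⟨cast (congrArg M₂.V h) v, fun hx => hm (by subst h; exact hx)⟩,
        by rw [h, gL_top e₁ e₂ h₀]⟩
  else
    Sum.inl (cast (congrArg M₁.V
      (pull_gL e₁ e₂ h₀ a v h))
      (e₁.fV (pull e₂ h₀ a v h).1 (pull e₂ h₀ a v h).2))

theorem fV2_spec_ne (h₀ : ℵ₀ < M₀.card) (a : M₂.L) (v : M₂.V a) (h : a ≠ ⊤) :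
    (⟨gL e₁ e₂ a, fV2 e₁ e₂ h₀ a v⟩ : Σ b, NV e₁ e₂ b)
      = ⟨e₁.fL (pull e₂ h₀ a v h).1,
          Sum.inl (e₁.fV (pull e₂ h₀ a v h).1 (pull e₂ h₀ a v h).2)⟩ := by
  rw [show fV2 e₁ e₂ h₀ a v = _ from dif_neg h]
  exact sigma_inl_cast e₁ e₂ (pull_gL e₁ e₂ h₀ a v h) _

theorem fV2_spec_pos (h₀ : ℵ₀ < M₀.card) (a : M₂.L) (v : M₂.V a) (h : a = ⊤)
    (hm : ∃ x : M₁.V ⊤, SamePredS e₁ e₂ x ⟨a, v⟩) :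
    ∃ x : M₁.V ⊤, SamePredS e₁ e₂ x ⟨a, v⟩ ∧
      (⟨gL e₁ e₂ a, fV2 e₁ e₂ h₀ a v⟩ : Σ b, NV e₁ e₂ b) = ⟨⊤, Sum.inl x⟩ := by
  refine ⟨hm.choose, hm.choose_spec, ?_⟩
  rw [show fV2 e₁ e₂ h₀ a v = _ from Eq.trans (dif_pos h) (dif_pos hm)]
  exact sigma_inl_cast e₁ e₂ (show (⊤ : M₁.L) = gL e₁ e₂ a by rw [h, gL_top e₁ e₂ h₀]) _

theorem fV2_spec_neg (h₀ : ℵ₀ < M₀.card) (a : M₂.L) (v : M₂.V a) (h : a = ⊤)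
    (hm : ¬∃ x : M₁.V ⊤, SamePredS e₁ e₂ x ⟨a, v⟩) :
    ∃ c : Extra e₁ e₂, (⟨⊤, c.1⟩ : Σ b, M₂.V b) = ⟨a, v⟩ ∧
      (⟨gL e₁ e₂ a, fV2 e₁ e₂ h₀ a v⟩ : Σ b, NV e₁ e₂ b) = ⟨⊤, Sum.inr ⟨c, rfl⟩⟩ := by
  refine ⟨⟨cast (congrArg M₂.V h) v, fun hx => hm (by subst h; exact hx)⟩, ?_, ?_⟩
  · exact sigma_cast h v
  · rw [show fV2 e₁ e₂ h₀ a v = _ from Eq.trans (dif_pos h) (dif_neg hm)]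
    exact sigma_inr_cast e₁ e₂ _ _
end Amalg5
section Amalg6
variable {M₀ M₁ M₂ : PsiModel} (e₁ : PsiEmbed M₀ M₁) (e₂ : PsiEmbed M₀ M₂)

/-- Nodes of the amalgam coming from `M₁`. -/
def sInl (p : Σ a : M₁.L, M₁.V a) : Σ a : M₁.L, NV e₁ e₂ a := ⟨p.1, .inl p.2⟩

theorem sInl_inj : Function.Injective (sInl e₁ e₂) := by
  rintro ⟨a, v⟩ ⟨b, w⟩ h
  have h' : (⟨a, Sum.inl v⟩ : Σ c, NV e₁ e₂ c) = ⟨b, Sum.inl w⟩ := h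
  obtain ⟨h1, h2⟩ := Sigma.mk.inj_iff.mp h'
  subst h1
  have h4 := eq_of_heq h2
  injection h4 with h5
  exact congrArg (Sigma.mk a) h5

/-- The embedding of `M₂` into the amalgam. -/
noncomputable def amalgF2 (h₀ : ℵ₀ < M₀.card) : PsiEmbed M₂ (amalg e₁ e₂ h₀) where
  fL := fun a => (gL e₁ e₂ a : M₁.L)
  fL_mono := gL_mono e₁ e₂ h₀
  fL_init := fun _ c _ => gL_surj e₁ e₂ h₀ c
  fV := fV2 e₁ e₂ h₀
  fV_inj := by
    intro a v v' h
    have hnode : (⟨gL e₁ e₂ a, fV2 e₁ e₂ h₀ a v⟩ : Σ b, NV e₁ e₂ b)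
        = ⟨gL e₁ e₂ a, fV2 e₁ e₂ h₀ a v'⟩ := by rw [h]
    by_cases ha : a = ⊤
    · subst ha
      by_cases hm : ∃ x : M₁.V ⊤, SamePredS e₁ e₂ x ⟨⊤, v⟩ <;>
        by_cases hm' : ∃ x : M₁.V ⊤, SamePredS e₁ e₂ x ⟨⊤, v'⟩
      · obtain ⟨x, hx, hs⟩ := fV2_spec_pos e₁ e₂ h₀ ⊤ v rfl hm
        obtain ⟨x', hx', hs'⟩ := fV2_spec_pos e₁ e₂ h₀ ⊤ v' rfl hm'
        have hxx : (⟨⊤, Sum.inl x⟩ : Σ b, NV e₁ e₂ b) = ⟨⊤, Sum.inl x'⟩ :=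
          hs.symm.trans (hnode.trans hs')
        have h5 := sigma_mk_snd hxx
        injection h5 with h6
        subst h6
        exact samePred_unique_right e₁ e₂ h₀ x v v' hx hx'
      · obtain ⟨x, hx, hs⟩ := fV2_spec_pos e₁ e₂ h₀ ⊤ v rfl hm
        obtain ⟨c, hc, hs'⟩ := fV2_spec_neg e₁ e₂ h₀ ⊤ v' rfl hm'
        have hxx : (⟨⊤, Sum.inl x⟩ : Σ b, NV e₁ e₂ b) = ⟨⊤, Sum.inr ⟨c, rfl⟩⟩ :=
          hs.symm.trans (hnode.trans hs')
        exact absurd (sigma_mk_snd hxx) (by simp)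
      · obtain ⟨c, hc, hs⟩ := fV2_spec_neg e₁ e₂ h₀ ⊤ v rfl hm
        obtain ⟨x, hx, hs'⟩ := fV2_spec_pos e₁ e₂ h₀ ⊤ v' rfl hm'
        have hxx : (⟨⊤, Sum.inr ⟨c, rfl⟩⟩ : Σ b, NV e₁ e₂ b) = ⟨⊤, Sum.inl x⟩ :=
          hs.symm.trans (hnode.trans hs')
        exact absurd (sigma_mk_snd hxx) (by simp)
      · obtain ⟨c, hc, hs⟩ := fV2_spec_neg e₁ e₂ h₀ ⊤ v rfl hm
        obtain ⟨c', hc', hs'⟩ := fV2_spec_neg e₁ e₂ h₀ ⊤ v' rfl hm'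
        have hxx : (⟨⊤, Sum.inr ⟨c, rfl⟩⟩ : Σ b, NV e₁ e₂ b) = ⟨⊤, Sum.inr ⟨c', rfl⟩⟩ :=
          hs.symm.trans (hnode.trans hs')
        have h5 := sigma_mk_snd hxx
        injection h5 with h6
        have h7 : c = c' := Subtype.ext (congrArg Subtype.val (Subtype.mk.injEq _ _ _ _ ▸ h6 : _))
        have hcv := sigma_mk_snd hc
        have hcv' := sigma_mk_snd hc'
        rw [← hcv, ← hcv']
        rw [h7]
    · have hs := fV2_spec_ne e₁ e₂ h₀ a v ha
      have hs' := fV2_spec_ne e₁ e₂ h₀ a v' ha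
      have hxx : sInl e₁ e₂ (e₁.map (pull e₂ h₀ a v ha))
          = sInl e₁ e₂ (e₁.map (pull e₂ h₀ a v' ha)) :=
        hs.symm.trans (hnode.trans hs')
      have h5 : pull e₂ h₀ a v ha = pull e₂ h₀ a v' ha :=
        e₁.map_inj (sInl_inj e₁ e₂ hxx)
      have h6 : (⟨a, v⟩ : Σ b, M₂.V b) = ⟨a, v'⟩ := by
        rw [← pull_spec e₂ h₀ a v ha, ← pull_spec e₂ h₀ a v' ha, h5]
      exact sigma_mk_snd h6
  fV_surj := by
    intro a ha w
    have hg : gL e₁ e₂ a ≠ ⊤ := by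
      intro hEq
      exact ha ((gL_mono e₁ e₂ h₀).injective (hEq.trans (gL_top e₁ e₂ h₀).symm))
    rcases w with w₁ | c
    · obtain ⟨z, hz⟩ := e₁.lift h₀ ⟨gL e₁ e₂ a, w₁⟩ hg
      have hfst : e₁.fL z.1 = gL e₁ e₂ a := congrArg Sigma.fst hz
      have hz2 : e₂.fL z.1 = a := by
        apply (gL_mono e₁ e₂ h₀).injective
        rw [gL_spec, hfst]
      subst hz2
      refine ⟨e₂.fV z.1 z.2, ?_⟩
      have hp := pull_spec e₂ h₀ (e₂.fL z.1) (e₂.fV z.1 z.2) ha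
      have hzz : pull e₂ h₀ (e₂.fL z.1) (e₂.fV z.1 z.2) ha = z := e₂.map_inj hp
      have hs := fV2_spec_ne e₁ e₂ h₀ (e₂.fL z.1) (e₂.fV z.1 z.2) ha
      rw [hzz] at hs
      have hfin := hs.trans (congrArg (sInl e₁ e₂) hz)
      exact sigma_mk_snd hfin
    · exact absurd c.2 hg
  tlt_iff := by
    intro x y
    obtain ⟨a, v⟩ := x
    obtain ⟨b, w⟩ := y
    show M₂.tlt ⟨a, v⟩ ⟨b, w⟩ ↔
      Ntlt e₁ e₂ ⟨gL e₁ e₂ a, fV2 e₁ e₂ h₀ a v⟩ ⟨gL e₁ e₂ b, fV2 e₁ e₂ h₀ b w⟩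
    by_cases ha : a = ⊤
    · apply iff_of_false
      · intro ht
        have hlt := M₂.tlt_level _ _ ht
        rw [show ((⟨a, v⟩ : Σ c, M₂.V c)).1 = ⊤ from ha] at hlt
        exact absurd (hlt.trans_le le_top) (lt_irrefl _)
      · intro ht
        have hlt : gL e₁ e₂ a < gL e₁ e₂ b := (amalg e₁ e₂ h₀).tlt_level _ _ ht
        rw [ha, gL_top e₁ e₂ h₀] at hlt
        exact absurd (hlt.trans_le le_top) (lt_irrefl _)
    · by_cases hb : b = ⊤
      · subst hb
        by_cases hm : ∃ x : M₁.V ⊤, SamePredS e₁ e₂ x ⟨⊤, w⟩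
        · obtain ⟨x, hx, hs⟩ := fV2_spec_pos e₁ e₂ h₀ ⊤ w rfl hm
          rw [hs, fV2_spec_ne e₁ e₂ h₀ a v ha, ntlt_inl_inl]
          have h5 := hx (pull e₂ h₀ a v ha)
          rw [pull_spec e₂ h₀ a v ha] at h5
          exact h5.symm
        · obtain ⟨c, hc, hs⟩ := fV2_spec_neg e₁ e₂ h₀ ⊤ w rfl hm
          rw [hs, fV2_spec_ne e₁ e₂ h₀ a v ha,
            ntlt_map_inr e₁ e₂ (pull e₂ h₀ a v ha) ⟨c, rfl⟩,
            pull_spec e₂ h₀ a v ha, hc]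
      · rw [fV2_spec_ne e₁ e₂ h₀ a v ha, fV2_spec_ne e₁ e₂ h₀ b w hb, ntlt_inl_inl]
        calc M₂.tlt ⟨a, v⟩ ⟨b, w⟩
            ↔ M₂.tlt (e₂.map (pull e₂ h₀ a v ha)) (e₂.map (pull e₂ h₀ b w hb)) := by
              rw [pull_spec e₂ h₀ a v ha, pull_spec e₂ h₀ b w hb]
          _ ↔ M₀.tlt (pull e₂ h₀ a v ha) (pull e₂ h₀ b w hb) := (e₂.tlt_iff _ _).symm
          _ ↔ M₁.tlt (e₁.map (pull e₂ h₀ a v ha)) (e₁.map (pull e₂ h₀ b w hb)) :=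
              e₁.tlt_iff _ _
end Amalg6
/-- Uncountable models of `ψ` can be amalgamated: given uncountable `M₀ ⊆ M₁, M₂`, there is
a model `N` of `ψ` with embeddings of `M₁` and `M₂` commuting over `M₀`. -/
theorem stmt13 (M₀ M₁ M₂ : PsiModel)
    (h₀ : ℵ₀ < M₀.card) (h₁ : ℵ₀ < M₁.card) (h₂ : ℵ₀ < M₂.card)
    (e₁ : PsiEmbed M₀ M₁) (e₂ : PsiEmbed M₀ M₂) :
    ∃ (N : PsiModel) (f₁ : PsiEmbed M₁ N) (f₂ : PsiEmbed M₂ N),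
      f₁.map ∘ e₁.map = f₂.map ∘ e₂.map := by
  refine ⟨amalg e₁ e₂ h₀, amalgF1 e₁ e₂ h₀, amalgF2 e₁ e₂ h₀, ?_⟩
  funext z
  obtain ⟨a₀, u⟩ := z
  show (⟨e₁.fL a₀, Sum.inl (e₁.fV a₀ u)⟩ : Σ b, NV e₁ e₂ b)
      = ⟨gL e₁ e₂ (e₂.fL a₀), fV2 e₁ e₂ h₀ (e₂.fL a₀) (e₂.fV a₀ u)⟩
  by_cases ha : a₀ = ⊤
  · subst ha
    -- the image of `u` in `M₁` is a branch matching the image of `u` in `M₂`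
    have hmem : (⟨⊤, cast (congrArg M₁.V (e₁.fL_top h₀)) (e₁.fV ⊤ u)⟩ : Σ b, M₁.V b)
        = e₁.map ⟨⊤, u⟩ := sigma_cast (e₁.fL_top h₀) (e₁.fV ⊤ u)
    set x : M₁.V ⊤ := cast (congrArg M₁.V (e₁.fL_top h₀)) (e₁.fV ⊤ u) with hxdef
    have hsp : SamePredS e₁ e₂ x ⟨e₂.fL ⊤, e₂.fV ⊤ u⟩ := by
      intro z
      rw [hmem]
      exact (e₁.tlt_iff z ⟨⊤, u⟩).symm.trans (e₂.tlt_iff z ⟨⊤, u⟩)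
    obtain ⟨x', hx', hs⟩ := fV2_spec_pos e₁ e₂ h₀ (e₂.fL ⊤) (e₂.fV ⊤ u)
      (e₂.fL_top h₀) ⟨x, hsp⟩
    rw [hs]
    have : x' = x := samePred_unique_left e₁ e₂ h₀ x' x _ hx' hsp
    rw [this, hxdef]
    exact (sigma_inl_cast e₁ e₂ (e₁.fL_top h₀) (e₁.fV ⊤ u)).symm
  · have ha2 : e₂.fL a₀ ≠ ⊤ := by
      intro hEq
      exact ha (e₂.fL_inj (hEq.trans (e₂.fL_top h₀).symm))
    have hs := fV2_spec_ne e₁ e₂ h₀ (e₂.fL a₀) (e₂.fV a₀ u) ha2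
    have hp := pull_spec e₂ h₀ (e₂.fL a₀) (e₂.fV a₀ u) ha2
    have hzz : pull e₂ h₀ (e₂.fL a₀) (e₂.fV a₀ u) ha2 = ⟨a₀, u⟩ := e₂.map_inj hp
    rw [hzz] at hs
    exact hs.symm
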